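/- arXiv:2211.11813 — 2 statements merged into one kernel-verified Lean document; each statement's English description precedes it below -/
import Mathlib

section
/- Let ω⁰ : ℝ² → ℝ³ be a simple solution of the H-system, i.e. ω⁰(z) = ω((az+b)/(cz+d)) + C for complex constants a, b, c, d with ad − bc ≠ 0 and a constant C ∈ ℝ³ (extended continuously at the pole of the Möbius map). Then there exists a constant K > 0 such that |∇ω⁰(z)| ≤ K/(1+|z|²) for all z ∈ ℝ². -/
open MeasureTheory
open scoped RealInnerProductSpace

noncomputable section

/-- `E3` is Euclidean three-space. -/
abbrev E3 := EuclideanSpace ℝ (Fin 3)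

/-- The cross product on `ℝ³`. -/
def cross3 (a b : E3) : E3 :=
  (WithLp.equiv 2 (Fin 3 → ℝ)).symm
    ![a 1 * b 2 - a 2 * b 1, a 2 * b 0 - a 0 * b 2, a 0 * b 1 - a 1 * b 0]

/-- Directional (partial) derivative of `u : ℝ² → ℝ³` (the plane identified with `ℂ`)
in the direction `v`; `pdz u 1` is `u_x`, `pdz u Complex.I` is `u_y`. -/
def pdz (u : ℂ → E3) (v : ℂ) (z : ℂ) : E3 := fderiv ℝ u z v

/-- The componentwise Laplacian `Δu = u_xx + u_yy` of `u : ℝ² → ℝ³`. -/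
def lapz (u : ℂ → E3) (z : ℂ) : E3 :=
  fderiv ℝ (fun w => fderiv ℝ u w 1) z 1 +
    fderiv ℝ (fun w => fderiv ℝ u w Complex.I) z Complex.I

/-- The inverse stereographic projection `ω(x+iy) = (1+x²+y²)⁻¹ (2x, 2y, x²+y²−1)`. -/
def omegaS (z : ℂ) : E3 :=
  (1 + z.re ^ 2 + z.im ^ 2)⁻¹ •
    (WithLp.equiv 2 (Fin 3 → ℝ)).symm ![2 * z.re, 2 * z.im, z.re ^ 2 + z.im ^ 2 - 1]

/-- The energy density `|∇u|² = |u_x|² + |u_y|²`. -/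
def energyAt (u : ℂ → E3) (z : ℂ) : ℝ := ‖pdz u 1 z‖ ^ 2 + ‖pdz u Complex.I z‖ ^ 2

/-- A simple solution of the H-system: `z ↦ ω((az+b)/(cz+d)) + C` with `ad − bc ≠ 0`,
extended continuously across the pole of the Möbius map. -/
def IsSimpleSolution (w : ℂ → E3) : Prop :=
  ∃ (a b c d : ℂ) (C : E3), a * d - b * c ≠ 0 ∧ Continuous w ∧
    ∀ z : ℂ, c * z + d ≠ 0 → w z = omegaS ((a * z + b) / (c * z + d)) + C


/-! ### Auxiliary development -/

/-- Homogeneous-coordinates version of the inverse stereographic projection. -/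
def Phi (p : ℂ × ℂ) : E3 :=
  (Complex.normSq p.1 + Complex.normSq p.2)⁻¹ •
    (WithLp.equiv 2 (Fin 3 → ℝ)).symm
      ![2 * (p.1 * (starRingEnd ℂ) p.2).re, 2 * (p.1 * (starRingEnd ℂ) p.2).im,
        Complex.normSq p.1 - Complex.normSq p.2]

lemma equiv_symm_smul (r : ℝ) (x : Fin 3 → ℝ) :
    (WithLp.equiv 2 (Fin 3 → ℝ)).symm (r • x) = r • (WithLp.equiv 2 (Fin 3 → ℝ)).symm x := rfl

lemma phi_eq_omegaS (u v : ℂ) (hv : v ≠ 0) : Phi (u, v) = omegaS (u / v) := by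
  have hq : u = (u / v) * v := by field_simp
  set q := u / v with hqdef
  have hnv : Complex.normSq v ≠ 0 := by simpa [Complex.normSq_eq_zero] using hv
  have h1 : (1 : ℝ) + q.re ^ 2 + q.im ^ 2 ≠ 0 := by positivity
  have hmul : (q * v * (starRingEnd ℂ) v) = q * (Complex.normSq v : ℝ) := by
    rw [mul_assoc, Complex.mul_conj]
  rw [Phi, omegaS]
  conv_lhs => rw [hq]
  rw [hmul]
  have hre : (q * (Complex.normSq v : ℝ) : ℂ).re = q.re * Complex.normSq v := by
    simp [Complex.mul_re]
  have him : (q * (Complex.normSq v : ℝ) : ℂ).im = q.im * Complex.normSq v := by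
    simp [Complex.mul_im]
  rw [hre, him, Complex.normSq_mul]
  have hvec : ![2 * (q.re * Complex.normSq v), 2 * (q.im * Complex.normSq v),
      Complex.normSq q * Complex.normSq v - Complex.normSq v]
      = Complex.normSq v • ![2 * q.re, 2 * q.im, q.re ^ 2 + q.im ^ 2 - 1] := by
    funext i
    fin_cases i <;> simp [Complex.normSq_apply] <;> ring
  rw [hvec, equiv_symm_smul, smul_smul]
  congr 1
  have h2 : Complex.normSq q * Complex.normSq v + Complex.normSq v
      = (1 + q.re ^ 2 + q.im ^ 2) * Complex.normSq v := by
    rw [Complex.normSq_apply]; ring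
  rw [h2, mul_inv, mul_assoc, inv_mul_cancel₀ hnv, mul_one]

lemma nsum_pos {p : ℂ × ℂ} (hp : p ≠ 0) : 0 < Complex.normSq p.1 + Complex.normSq p.2 := by
  by_contra h
  push_neg at h
  have h1 : Complex.normSq p.1 = 0 ∧ Complex.normSq p.2 = 0 := by
    constructor <;> nlinarith [Complex.normSq_nonneg p.1, Complex.normSq_nonneg p.2]
  exact hp (Prod.ext (Complex.normSq_eq_zero.mp h1.1) (Complex.normSq_eq_zero.mp h1.2))

lemma contDiff_normSq : ContDiff ℝ 1 (Complex.normSq : ℂ → ℝ) := by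
  have : (Complex.normSq : ℂ → ℝ) = fun z => z.re * z.re + z.im * z.im := by
    funext z; exact Complex.normSq_apply z
  rw [this]
  exact (Complex.reCLM.contDiff.mul Complex.reCLM.contDiff).add
    (Complex.imCLM.contDiff.mul Complex.imCLM.contDiff)

lemma contDiff_mulconj : ContDiff ℝ 1 (fun p : ℂ × ℂ => p.1 * (starRingEnd ℂ) p.2) :=
  contDiff_fst.mul (Complex.conjCLE.contDiff.comp contDiff_snd)

lemma contDiffOn_Phi : ContDiffOn ℝ 1 Phi {p : ℂ × ℂ | p ≠ 0} := by
  have hn : ContDiff ℝ 1 (fun p : ℂ × ℂ => Complex.normSq p.1 + Complex.normSq p.2) :=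
    (contDiff_normSq.comp contDiff_fst).add (contDiff_normSq.comp contDiff_snd)
  have hV0 : ContDiff ℝ 1 (fun p : ℂ × ℂ =>
      (![2 * (p.1 * (starRingEnd ℂ) p.2).re, 2 * (p.1 * (starRingEnd ℂ) p.2).im,
        Complex.normSq p.1 - Complex.normSq p.2] : Fin 3 → ℝ)) := by
    rw [contDiff_pi]
    intro i
    fin_cases i <;> simp only [Matrix.cons_val_zero, Matrix.cons_val_one, Matrix.head_cons,
      Matrix.cons_val_two, Matrix.tail_cons, Fin.mk_one, Fin.mk_zero]
    · exact contDiff_const.mul (Complex.reCLM.contDiff.comp contDiff_mulconj)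
    · exact contDiff_const.mul (Complex.imCLM.contDiff.comp contDiff_mulconj)
    · exact (contDiff_normSq.comp contDiff_fst).sub (contDiff_normSq.comp contDiff_snd)
  have hV : ContDiff ℝ 1 (fun p : ℂ × ℂ =>
      (WithLp.equiv 2 (Fin 3 → ℝ)).symm
        ![2 * (p.1 * (starRingEnd ℂ) p.2).re, 2 * (p.1 * (starRingEnd ℂ) p.2).im,
          Complex.normSq p.1 - Complex.normSq p.2]) :=
    (PiLp.continuousLinearEquiv 2 ℝ (fun _ : Fin 3 => ℝ)).symm.contDiff.comp hV0
  exact (hn.contDiffOn.inv (fun p hp => (nsum_pos hp).ne')).smul hV.contDiffOn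

lemma Phi_smul (l : ℂ) (hl : l ≠ 0) (p : ℂ × ℂ) : Phi (l • p) = Phi p := by
  have hnl : Complex.normSq l ≠ 0 := by simpa [Complex.normSq_eq_zero] using hl
  have hsm : l • p = (l * p.1, l * p.2) := rfl
  rw [hsm, Phi, Phi]
  have hmul : l * p.1 * (starRingEnd ℂ) (l * p.2)
      = (Complex.normSq l : ℝ) * (p.1 * (starRingEnd ℂ) p.2) := by
    rw [map_mul]
    rw [show l * p.1 * ((starRingEnd ℂ) l * (starRingEnd ℂ) p.2)
      = (l * (starRingEnd ℂ) l) * (p.1 * (starRingEnd ℂ) p.2) by ring, Complex.mul_conj]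
  rw [hmul]
  simp only [Complex.normSq_mul, Complex.re_ofReal_mul, Complex.im_ofReal_mul]
  have hvec : ![2 * (Complex.normSq l * (p.1 * (starRingEnd ℂ) p.2).re),
      2 * (Complex.normSq l * (p.1 * (starRingEnd ℂ) p.2).im),
      Complex.normSq l * Complex.normSq p.1 - Complex.normSq l * Complex.normSq p.2]
      = Complex.normSq l • ![2 * (p.1 * (starRingEnd ℂ) p.2).re,
        2 * (p.1 * (starRingEnd ℂ) p.2).im, Complex.normSq p.1 - Complex.normSq p.2] := by
    funext i; fin_cases i <;> simp <;> ring
  rw [hvec]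
  rw [equiv_symm_smul, smul_smul]
  congr 1
  rw [show Complex.normSq l * Complex.normSq p.1 + Complex.normSq l * Complex.normSq p.2
    = Complex.normSq l * (Complex.normSq p.1 + Complex.normSq p.2) by ring]
  rw [mul_inv, mul_comm, ← mul_assoc, mul_inv_cancel₀ hnl, one_mul]

lemma isOpen_ne0 : IsOpen {p : ℂ × ℂ | p ≠ 0} := isOpen_compl_singleton

lemma diffAt_Phi {p : ℂ × ℂ} (hp : p ≠ 0) : DifferentiableAt ℝ Phi p :=
  (contDiffOn_Phi.differentiableOn one_ne_zero).differentiableAt (isOpen_ne0.mem_nhds hp)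

lemma real_smul_eq (r : ℝ) (x : ℂ × ℂ) : r • x = ((r : ℂ)) • x := by
  apply Prod.ext <;> simp [Complex.real_smul]

lemma fderiv_Phi_smul_self {p : ℂ × ℂ} (hp : p ≠ 0) (α : ℂ) :
    fderiv ℝ Phi p (α • p) = 0 := by
  have hdiff := diffAt_Phi hp
  have hc : HasDerivAt (fun t : ℝ => p + t • (α • p)) (α • p) 0 := by
    simpa using ((hasDerivAt_id (0 : ℝ)).smul_const (α • p)).const_add p
  have hcomp : HasDerivAt (fun t : ℝ => Phi (p + t • (α • p)))
      (fderiv ℝ Phi p (α • p)) 0 := by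
    have h0 : HasFDerivAt Phi (fderiv ℝ Phi p) (p + (0 : ℝ) • (α • p)) := by
      simpa using hdiff.hasFDerivAt
    exact h0.comp_hasDerivAt 0 hc
  have hev : (fun t : ℝ => Phi (p + t • (α • p))) =ᶠ[nhds (0 : ℝ)] fun _ => Phi p := by
    have hcontc : ContinuousAt (fun t : ℝ => (1 : ℂ) + (t : ℂ) * α) 0 := by fun_prop
    have hne : ∀ᶠ t : ℝ in nhds 0, (1 : ℂ) + (t : ℂ) * α ≠ 0 := by
      apply hcontc.eventually_ne; simp
    filter_upwards [hne] with t ht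
    have harg : p + t • (α • p) = ((1 : ℂ) + (t : ℂ) * α) • p := by
      rw [real_smul_eq, smul_smul, add_smul, one_smul]
    rw [harg, Phi_smul _ ht]
  have hconst : HasDerivAt (fun _ : ℝ => Phi p) (fderiv ℝ Phi p (α • p)) 0 :=
    hcomp.congr_of_eventuallyEq hev.symm
  exact (hconst.unique (hasDerivAt_const 0 _))

lemma exists_fderiv_Phi_bound :
    ∃ C₀ > (0 : ℝ), ∀ p : ℂ × ℂ, p ≠ 0 → ‖fderiv ℝ Phi p‖ ≤ C₀ / ‖p‖ := by
  have hcont : ContinuousOn (fderiv ℝ Phi) {p : ℂ × ℂ | p ≠ 0} :=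
    contDiffOn_Phi.continuousOn_fderiv_of_isOpen isOpen_ne0 le_rfl
  have hsub : Metric.sphere (0 : ℂ × ℂ) 1 ⊆ {p : ℂ × ℂ | p ≠ 0} := by
    intro p hp
    simp only [Metric.mem_sphere, dist_zero_right] at hp
    intro h0; rw [h0] at hp; simp at hp
  obtain ⟨Cb, hCb⟩ := (isCompact_sphere (0 : ℂ × ℂ) 1).exists_bound_of_continuousOn
    (hcont.mono hsub)
  refine ⟨max Cb 1, lt_of_lt_of_le one_pos (le_max_right _ _), fun p hp => ?_⟩
  have hpn : (0 : ℝ) < ‖p‖ := norm_pos_iff.mpr hp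
  set r : ℝ := ‖p‖⁻¹ with hr
  have hrpos : 0 < r := inv_pos.mpr hpn
  set q := r • p with hqdef
  have hqn : ‖q‖ = 1 := by
    rw [hqdef, norm_smul, Real.norm_eq_abs, abs_of_pos hrpos, hr, inv_mul_cancel₀ hpn.ne']
  have hq0 : q ≠ 0 := by intro h; rw [h] at hqn; simp at hqn
  have hfeq : fderiv ℝ Phi p = (fderiv ℝ Phi q).comp (r • ContinuousLinearMap.id ℝ (ℂ × ℂ)) := by
    have hPhieq : Phi = fun x => Phi (r • x) := by
      funext x
      rw [real_smul_eq, Phi_smul]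
      exact_mod_cast hrpos.ne'
    have hM : HasFDerivAt (fun x : ℂ × ℂ => r • x)
        (r • ContinuousLinearMap.id ℝ (ℂ × ℂ)) p :=
      (r • ContinuousLinearMap.id ℝ (ℂ × ℂ)).hasFDerivAt
    have hq : HasFDerivAt Phi (fderiv ℝ Phi q) q := (diffAt_Phi hq0).hasFDerivAt
    have hcompd : HasFDerivAt (fun x : ℂ × ℂ => Phi (r • x))
        ((fderiv ℝ Phi q).comp (r • ContinuousLinearMap.id ℝ (ℂ × ℂ))) p := HasFDerivAt.comp (g := Phi) (f := fun x : ℂ × ℂ => r • x) p hq hM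
    rw [← hPhieq] at hcompd
    exact hcompd.fderiv
  rw [hfeq]
  apply ContinuousLinearMap.opNorm_le_bound _ (by positivity)
  intro v
  have h1 : ‖(fderiv ℝ Phi q).comp (r • ContinuousLinearMap.id ℝ (ℂ × ℂ)) v‖
      = ‖fderiv ℝ Phi q (r • v)‖ := rfl
  rw [h1]
  calc ‖fderiv ℝ Phi q (r • v)‖ ≤ ‖fderiv ℝ Phi q‖ * ‖r • v‖ :=
        (fderiv ℝ Phi q).le_opNorm _
    _ ≤ max Cb 1 * (r * ‖v‖) := by
        rw [norm_smul, Real.norm_eq_abs, abs_of_pos hrpos]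
        exact mul_le_mul (le_trans (hCb q (by simp [Metric.mem_sphere, hqn])) (le_max_left _ _))
          le_rfl (by positivity) (le_trans zero_le_one (le_max_right _ _))
    _ = max Cb 1 / ‖p‖ * ‖v‖ := by rw [hr]; ring

lemma mobius_lower_bound (a b c d : ℂ) (hdet : a * d - b * c ≠ 0) :
    ∃ μ > (0 : ℝ), ∀ z : ℂ,
      μ * (1 + ‖z‖ ^ 2) ≤ Complex.normSq (a * z + b) + Complex.normSq (c * z + d) := by
  set M : ℝ := ‖a‖ ^ 2 + ‖b‖ ^ 2 + ‖c‖ ^ 2 + ‖d‖ ^ 2 with hM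
  have hdn : 0 < ‖a * d - b * c‖ := norm_pos_iff.mpr hdet
  refine ⟨‖a * d - b * c‖ ^ 2 / (2 * (M + 1)), by positivity, fun z => ?_⟩
  have h1 : ‖a * d - b * c‖ * ‖z‖ ≤ ‖d‖ * ‖a * z + b‖ + ‖b‖ * ‖c * z + d‖ := by
    calc ‖a * d - b * c‖ * ‖z‖ = ‖d * (a * z + b) - b * (c * z + d)‖ := by
          rw [← norm_mul]; ring_nf
      _ ≤ ‖d * (a * z + b)‖ + ‖b * (c * z + d)‖ := norm_sub_le _ _
      _ = ‖d‖ * ‖a * z + b‖ + ‖b‖ * ‖c * z + d‖ := by rw [norm_mul, norm_mul]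
  have h2 : ‖a * d - b * c‖ ≤ ‖a‖ * ‖c * z + d‖ + ‖c‖ * ‖a * z + b‖ := by
    calc ‖a * d - b * c‖ = ‖a * (c * z + d) - c * (a * z + b)‖ := by ring_nf
      _ ≤ ‖a * (c * z + d)‖ + ‖c * (a * z + b)‖ := norm_sub_le _ _
      _ = ‖a‖ * ‖c * z + d‖ + ‖c‖ * ‖a * z + b‖ := by rw [norm_mul, norm_mul]
  have hq1 : Complex.normSq (a * z + b) = ‖a * z + b‖ ^ 2 := by
    rw [Complex.normSq_eq_norm_sq]
  have hq2 : Complex.normSq (c * z + d) = ‖c * z + d‖ ^ 2 := by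
    rw [Complex.normSq_eq_norm_sq]
  rw [hq1, hq2, div_mul_eq_mul_div, div_le_iff₀ (by positivity)]
  have h1' : (‖a * d - b * c‖ * ‖z‖) ^ 2 ≤ (‖d‖ * ‖a * z + b‖ + ‖b‖ * ‖c * z + d‖) ^ 2 :=
    mul_self_le_mul_self (by positivity) h1 |>.trans_eq (by ring) |>.trans_eq' (by ring)
  have h2' : ‖a * d - b * c‖ ^ 2 ≤ (‖a‖ * ‖c * z + d‖ + ‖c‖ * ‖a * z + b‖) ^ 2 :=
    mul_self_le_mul_self (by positivity) h2 |>.trans_eq (by ring) |>.trans_eq' (by ring)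
  nlinarith [sq_nonneg (‖d‖ * ‖a * z + b‖ - ‖b‖ * ‖c * z + d‖),
    sq_nonneg (‖a‖ * ‖c * z + d‖ - ‖c‖ * ‖a * z + b‖),
    sq_nonneg (‖a * z + b‖), sq_nonneg (‖c * z + d‖),
    sq_nonneg ‖z‖, sq_nonneg (‖a‖*‖a*z+b‖), sq_nonneg (‖b‖*‖a*z+b‖),
    sq_nonneg (‖c‖*‖c*z+d‖), sq_nonneg (‖d‖*‖c*z+d‖),
    sq_nonneg (‖a‖*‖c*z+d‖), sq_nonneg (‖b‖*‖c*z+d‖),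
    sq_nonneg (‖c‖*‖a*z+b‖), sq_nonneg (‖d‖*‖a*z+b‖)]


set_option maxHeartbeats 1000000 in
/-- The gradient of a simple solution of the H-system satisfies
`|∇ω⁰(z)| ≤ K/(1+|z|²)` for some constant `K > 0`. -/
theorem stmt3 (w : ℂ → E3) (hw : IsSimpleSolution w) :
    ∃ K > (0 : ℝ), ∀ z : ℂ, Real.sqrt (energyAt w z) ≤ K / (1 + ‖z‖ ^ 2) := by
  obtain ⟨a, b, c, d, C, hdet, hcont, hform⟩ := hw
  obtain ⟨C₀, hC₀, hC₀b⟩ := exists_fderiv_Phi_bound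
  obtain ⟨μ, hμ, hμb⟩ := mobius_lower_bound a b c d hdet
  set P : ℂ → ℂ × ℂ := fun z => (a * z + b, c * z + d) with hPdef
  have hP0 : ∀ z, P z ≠ 0 := by
    intro z h
    apply hdet
    have h1 : a * z + b = 0 := congrArg Prod.fst h
    have h2 : c * z + d = 0 := congrArg Prod.snd h
    calc a * d - b * c = a * (c * z + d) - c * (a * z + b) := by ring
      _ = 0 := by rw [h1, h2]; ring
  have hnz : ∀ z, 0 < Complex.normSq (a * z + b) + Complex.normSq (c * z + d) :=
    fun z => nsum_pos (hP0 z)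
  have hPc : Continuous P := by fun_prop
  have hrhs : Continuous fun z => Phi (P z) + C := by
    rw [continuous_iff_continuousAt]
    intro z
    exact ((contDiffOn_Phi.continuousOn.continuousAt
      (isOpen_ne0.mem_nhds (hP0 z))).comp hPc.continuousAt).add continuousAt_const
  have hdense : Dense {z : ℂ | c * z + d ≠ 0} := by
    by_cases hc : c = 0
    · have hd : d ≠ 0 := by intro hd0; apply hdet; rw [hc, hd0]; ring
      have huniv : {z : ℂ | c * z + d ≠ 0} = Set.univ := by
        ext z; simp [hc, hd]
      rw [huniv]; exact dense_univ
    · have hiff : ∀ z : ℂ, c * z + d = 0 ↔ z = -d / c := by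
        intro z
        rw [eq_div_iff hc]
        constructor <;> intro h <;> linear_combination h
      have hcompl : {z : ℂ | c * z + d ≠ 0} = {(-d / c)}ᶜ := by
        ext z
        simp only [Set.mem_setOf_eq, Set.mem_compl_iff, Set.mem_singleton_iff]
        exact not_congr (hiff z)
      rw [hcompl]
      exact dense_compl_singleton _
  have hweq : w = fun z => Phi (P z) + C := by
    apply Continuous.ext_on hdense hcont hrhs
    intro z hz
    rw [hform z hz]
    congr 1
    exact (phi_eq_omegaS (a * z + b) (c * z + d) hz).symm
  set A : ℂ →L[ℝ] ℂ × ℂ :=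
    (((ContinuousLinearMap.mul ℂ ℂ) a).restrictScalars ℝ).prod
      (((ContinuousLinearMap.mul ℂ ℂ) c).restrictScalars ℝ) with hAdef
  have hAapp : ∀ v : ℂ, A v = v • ((a, c) : ℂ × ℂ) := by
    intro v
    apply Prod.ext <;>
      simp [hAdef, smul_eq_mul, mul_comm]
  have hPA : P = fun z => A z + ((b, d) : ℂ × ℂ) := by
    funext z
    rw [hAapp z]
    apply Prod.ext <;> simp [smul_eq_mul, mul_comm] <;> rfl
  have hA : ∀ z, HasFDerivAt P A z := by
    intro z
    rw [hPA]
    exact A.hasFDerivAt.add_const (b, d)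
  have hw' : ∀ z, HasFDerivAt w ((fderiv ℝ Phi (P z)).comp A) z := by
    intro z
    rw [hweq]
    exact ((diffAt_Phi (hP0 z)).hasFDerivAt.comp z (hA z)).add_const C
  have hkey : ∀ z (v : ℂ), ‖fderiv ℝ w z v‖ ≤
      C₀ * ‖a * d - b * c‖ * ‖v‖ /
        (Complex.normSq (a * z + b) + Complex.normSq (c * z + d)) := by
    intro z v
    set p₁ : ℂ := a * z + b with hp₁
    set p₂ : ℂ := c * z + d with hp₂
    set n : ℝ := Complex.normSq p₁ + Complex.normSq p₂ with hndef
    have hn : 0 < n := hnz z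
    have hn0 : (n : ℂ) ≠ 0 := by exact_mod_cast hn.ne'
    have hcastn : (n : ℂ) = p₁ * (starRingEnd ℂ) p₁ + p₂ * (starRingEnd ℂ) p₂ := by
      rw [hndef, Complex.ofReal_add, Complex.mul_conj, Complex.mul_conj]
    have hdet2 : a * p₂ - c * p₁ = a * d - b * c := by rw [hp₁, hp₂]; ring
    set α : ℂ := v * (a * (starRingEnd ℂ) p₁ + c * (starRingEnd ℂ) p₂) / (n : ℂ) with hα
    set ρ : ℂ × ℂ := ((v * (a * d - b * c) / (n : ℂ)) * (starRingEnd ℂ) p₂,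
      -((v * (a * d - b * c) / (n : ℂ)) * (starRingEnd ℂ) p₁)) with hρdef
    have hdecomp : v • ((a, c) : ℂ × ℂ) = α • P z + ρ := by
      have hPz : P z = (p₁, p₂) := rfl
      rw [hPz]
      apply Prod.ext
      · show v * a = α * p₁ + ρ.1
        rw [hα, hρdef, ← hdet2]
        field_simp
        linear_combination (v * a) * hcastn
      · show v * c = α * p₂ + ρ.2
        rw [hα, hρdef, ← hdet2]
        field_simp
        linear_combination (v * c) * hcastn
    have hDv : fderiv ℝ w z v = fderiv ℝ Phi (P z) ρ := by
      rw [(hw' z).fderiv]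
      show fderiv ℝ Phi (P z) (A v) = _
      rw [hAapp v, hdecomp, map_add, fderiv_Phi_smul_self (hP0 z) α, zero_add]
    have hsn : ‖v * (a * d - b * c) / (n : ℂ)‖ = ‖v‖ * ‖a * d - b * c‖ / n := by
      rw [norm_div, norm_mul, Complex.norm_real, Real.norm_eq_abs, abs_of_pos hn]
    have hρ : ‖ρ‖ ≤ ‖v‖ * ‖a * d - b * c‖ / n * ‖P z‖ := by
      have hnum : (0 : ℝ) ≤ ‖v‖ * ‖a * d - b * c‖ / n := by positivity
      rw [Prod.norm_def]
      apply max_le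
      · rw [norm_mul, hsn, RCLike.norm_conj]
        exact mul_le_mul_of_nonneg_left (norm_snd_le (P z)) hnum
      · rw [norm_neg, norm_mul, hsn, RCLike.norm_conj]
        exact mul_le_mul_of_nonneg_left (norm_fst_le (P z)) hnum
    have hPzpos : (0 : ℝ) < ‖P z‖ := norm_pos_iff.mpr (hP0 z)
    calc ‖fderiv ℝ w z v‖ = ‖fderiv ℝ Phi (P z) ρ‖ := by rw [hDv]
      _ ≤ ‖fderiv ℝ Phi (P z)‖ * ‖ρ‖ := (fderiv ℝ Phi (P z)).le_opNorm _
      _ ≤ (C₀ / ‖P z‖) * (‖v‖ * ‖a * d - b * c‖ / n * ‖P z‖) := by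
          apply mul_le_mul (hC₀b _ (hP0 z)) hρ (norm_nonneg _) (by positivity)
      _ = C₀ * ‖a * d - b * c‖ * ‖v‖ / n := by
          field_simp
  refine ⟨Real.sqrt 2 * C₀ * ‖a * d - b * c‖ / μ + 1, by positivity, fun z => ?_⟩
  set n : ℝ := Complex.normSq (a * z + b) + Complex.normSq (c * z + d) with hndef
  have hn : 0 < n := hnz z
  have h1z : (0 : ℝ) < 1 + ‖z‖ ^ 2 := by positivity
  have hμz : μ * (1 + ‖z‖ ^ 2) ≤ n := hμb z
  have hB : (0 : ℝ) ≤ C₀ * ‖a * d - b * c‖ / n := by positivity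
  have e1 : energyAt w z ≤ 2 * (C₀ * ‖a * d - b * c‖ / n) ^ 2 := by
    have h1 : ‖fderiv ℝ w z 1‖ ≤ C₀ * ‖a * d - b * c‖ / n := by
      have := hkey z 1
      rwa [norm_one, mul_one] at this
    have h2 : ‖fderiv ℝ w z Complex.I‖ ≤ C₀ * ‖a * d - b * c‖ / n := by
      have := hkey z Complex.I
      rwa [Complex.norm_I, mul_one] at this
    have h1' := pow_le_pow_left₀ (norm_nonneg (fderiv ℝ w z 1)) h1 2
    have h2' := pow_le_pow_left₀ (norm_nonneg (fderiv ℝ w z Complex.I)) h2 2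
    simp only [energyAt, pdz]
    linarith
  calc Real.sqrt (energyAt w z)
      ≤ Real.sqrt (2 * (C₀ * ‖a * d - b * c‖ / n) ^ 2) := Real.sqrt_le_sqrt e1
    _ = Real.sqrt 2 * (C₀ * ‖a * d - b * c‖ / n) := by
        rw [Real.sqrt_mul (by norm_num : (0:ℝ) ≤ 2), Real.sqrt_sq hB]
    _ ≤ Real.sqrt 2 * (C₀ * ‖a * d - b * c‖ / (μ * (1 + ‖z‖ ^ 2))) := by
        gcongr
    _ = (Real.sqrt 2 * C₀ * ‖a * d - b * c‖ / μ) / (1 + ‖z‖ ^ 2) := by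
        field_simp
    _ ≤ (Real.sqrt 2 * C₀ * ‖a * d - b * c‖ / μ + 1) / (1 + ‖z‖ ^ 2) := by
        gcongr
        linarith
end
end

section
/- There exists a constant C > 0 such that for all z₀ ∈ ℝ², ∫_{ℝ²} (1/|z − z₀|) · (1/(1 + |z|²)) dz ≤ C · ln(2 + |z₀|) / (1 + |z₀|). -/
open MeasureTheory

noncomputable section

/-- `E2` is the Euclidean plane. -/
abbrev E2 := EuclideanSpace ℝ (Fin 2)

/-- The first standard basis vector of the plane. -/
def e₁ : E2 := EuclideanSpace.single 0 1

/-- The second standard basis vector of the plane. -/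
def e₂ : E2 := EuclideanSpace.single 1 1

/-- The Laplacian `Δα = α_xx + α_yy` of a scalar function on the plane. -/
def lap2 (α : E2 → ℝ) (x : E2) : ℝ :=
  fderiv ℝ (fun y => fderiv ℝ α y e₁) x e₁ + fderiv ℝ (fun y => fderiv ℝ α y e₂) x e₂

open Metric Set ENNReal in
private noncomputable def kb : ℝ≥0∞ := volume (Metric.ball (0:E2) 1)

set_option maxHeartbeats 1000000

section Stmt12Aux
open Metric Set ENNReal

private lemma kb_lt_top : kb < ⊤ := measure_ball_lt_top

private lemma vol_ball (c : E2) {r : ℝ} (hr : 0 ≤ r) :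
    volume (Metric.ball c r) = ENNReal.ofReal (r^2) * kb := by
  rw [MeasureTheory.Measure.addHaar_ball volume c hr]; norm_num [kb]

private lemma tsum_half {a : ℝ} (ha : 0 ≤ a) :
    ∑' n : ℕ, ENNReal.ofReal (a * (2⁻¹:ℝ)^n) = ENNReal.ofReal (2*a) := by
  rw [← ENNReal.ofReal_tsum_of_nonneg (fun n => by positivity)
    ((summable_geometric_of_lt_one (by norm_num) (by norm_num)).mul_left a)]
  congr 1
  rw [tsum_mul_left, tsum_geometric_inv_two]; ring

private lemma pieceA (c : E2) {ρ : ℝ} (hρ : 0 < ρ) :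
    ∫⁻ z in Metric.ball c ρ, ENNReal.ofReal ‖z - c‖⁻¹ ≤ ENNReal.ofReal (4*ρ) * kb := by
  classical
  set A : ℕ → Set E2 := fun n =>
    {z | ρ * (2⁻¹:ℝ)^(n+1) ≤ ‖z - c‖} ∩ Metric.ball c (ρ * (2⁻¹:ℝ)^n) with hA
  have hcover : Metric.ball c ρ ⊆ {c} ∪ ⋃ n, A n := by
    intro z hz
    rcases eq_or_ne z c with rfl | hne
    · exact Or.inl rfl
    · right
      have ht : 0 < ‖z - c‖ := by
        simpa [norm_pos_iff, sub_eq_zero] using hne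
      have hlt : ‖z - c‖ < ρ := by
        simpa [Metric.mem_ball, dist_eq_norm] using hz
      have hex : ∃ n : ℕ, ρ * (2⁻¹:ℝ)^n ≤ ‖z - c‖ := by
        obtain ⟨n, hn⟩ := exists_pow_lt_of_lt_one (div_pos ht hρ)
          (by norm_num : (2⁻¹:ℝ) < 1)
        have := (lt_div_iff₀ hρ).mp hn
        exact ⟨n, by linarith [this]⟩
      have h₀ : ρ * (2⁻¹:ℝ)^(Nat.find hex) ≤ ‖z - c‖ := Nat.find_spec hex
      have hn₀ : Nat.find hex ≠ 0 := by
        intro h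
        rw [h] at h₀; simp at h₀; linarith
      obtain ⟨n, hn⟩ := Nat.exists_eq_succ_of_ne_zero hn₀
      have h₁ : ¬ (ρ * (2⁻¹:ℝ)^n ≤ ‖z - c‖) := Nat.find_min hex (by omega)
      refine Set.mem_iUnion.2 ⟨n, ⟨?_, ?_⟩⟩
      · show ρ * (2⁻¹:ℝ)^(n+1) ≤ ‖z - c‖
        rw [hn, Nat.succ_eq_add_one] at h₀; exact h₀
      · simpa [Metric.mem_ball, dist_eq_norm] using not_le.1 h₁
  have hAmeas : ∀ n, MeasurableSet (A n) := fun n =>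
    (measurableSet_le measurable_const ((measurable_id.sub_const c).norm)).inter
      measurableSet_ball
  calc ∫⁻ z in Metric.ball c ρ, ENNReal.ofReal ‖z - c‖⁻¹
      ≤ ∫⁻ z in {c} ∪ ⋃ n, A n, ENNReal.ofReal ‖z - c‖⁻¹ := lintegral_mono_set hcover
    _ ≤ (∫⁻ z in ({c} : Set E2), ENNReal.ofReal ‖z - c‖⁻¹)
        + ∫⁻ z in ⋃ n, A n, ENNReal.ofReal ‖z - c‖⁻¹ := lintegral_union_le _ _ _
    _ = ∫⁻ z in ⋃ n, A n, ENNReal.ofReal ‖z - c‖⁻¹ := by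
        rw [setLIntegral_measure_zero _ _ (measure_singleton c), zero_add]
    _ ≤ ∑' n, ∫⁻ z in A n, ENNReal.ofReal ‖z - c‖⁻¹ := lintegral_iUnion_le _ _
    _ ≤ ∑' n : ℕ, ENNReal.ofReal (2*ρ*(2⁻¹:ℝ)^n) * kb := by
        refine ENNReal.tsum_le_tsum fun n => ?_
        have hb : ∫⁻ z in A n, ENNReal.ofReal ‖z - c‖⁻¹
            ≤ ∫⁻ _ in A n, ENNReal.ofReal ((ρ * (2⁻¹:ℝ)^(n+1))⁻¹) := by
          refine setLIntegral_mono' (hAmeas n) fun z hz => ?_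
          refine ENNReal.ofReal_le_ofReal ?_
          exact inv_anti₀ (by positivity) hz.1
        refine hb.trans ?_
        rw [setLIntegral_const]
        have hvol : volume (A n) ≤ ENNReal.ofReal ((ρ*(2⁻¹:ℝ)^n)^2) * kb := by
          rw [← vol_ball c (by positivity)]
          exact measure_mono Set.inter_subset_right
        calc ENNReal.ofReal ((ρ * (2⁻¹:ℝ)^(n+1))⁻¹) * volume (A n)
            ≤ ENNReal.ofReal ((ρ * (2⁻¹:ℝ)^(n+1))⁻¹) *
              (ENNReal.ofReal ((ρ*(2⁻¹:ℝ)^n)^2) * kb) := by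
              exact mul_le_mul_right hvol _
          _ = ENNReal.ofReal (2*ρ*(2⁻¹:ℝ)^n) * kb := by
              rw [← mul_assoc, ← ENNReal.ofReal_mul (by positivity)]
              congr 2
              have h2 : ((2:ℝ)⁻¹)^n ≠ 0 := by positivity
              field_simp
              ring
    _ = ENNReal.ofReal (4*ρ) * kb := by
        rw [ENNReal.tsum_mul_right, tsum_half (by positivity)]
        congr 1; ring

private lemma pieceC {S : ℝ} (hS : 1 ≤ S) :
    ∫⁻ z in {z : E2 | S < ‖z‖}, ENNReal.ofReal (‖z‖^3)⁻¹
      ≤ ENNReal.ofReal (8/S) * kb := by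
  classical
  have hS0 : 0 < S := by linarith
  set B : ℕ → Set E2 := fun n =>
    {z : E2 | S * 2^n ≤ ‖z‖} ∩ Metric.ball 0 (S * 2^(n+1)) with hB
  have hcover : {z : E2 | S < ‖z‖} ⊆ ⋃ n, B n := by
    intro z hz
    have hz' : S < ‖z‖ := hz
    have hex : ∃ n : ℕ, ‖z‖ < S * 2^n := by
      obtain ⟨n, hn⟩ := pow_unbounded_of_one_lt (‖z‖ / S) (by norm_num : (1:ℝ) < 2)
      exact ⟨n, by rw [div_lt_iff₀ hS0] at hn; linarith [hn]⟩
    have h₀ : ‖z‖ < S * 2^(Nat.find hex) := Nat.find_spec hex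
    have hn₀ : Nat.find hex ≠ 0 := by
      intro h; rw [h] at h₀; simp at h₀; linarith
    obtain ⟨n, hn⟩ := Nat.exists_eq_succ_of_ne_zero hn₀
    have h₁ : ¬ (‖z‖ < S * 2^n) := Nat.find_min hex (by omega)
    refine Set.mem_iUnion.2 ⟨n, ⟨not_lt.1 h₁, ?_⟩⟩
    · rw [hn, Nat.succ_eq_add_one] at h₀
      simpa [Metric.mem_ball, dist_eq_norm] using h₀
  have hBmeas : ∀ n, MeasurableSet (B n) := fun n =>
    (measurableSet_le measurable_const measurable_norm).inter measurableSet_ball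
  calc ∫⁻ z in {z : E2 | S < ‖z‖}, ENNReal.ofReal (‖z‖^3)⁻¹
      ≤ ∫⁻ z in ⋃ n, B n, ENNReal.ofReal (‖z‖^3)⁻¹ := lintegral_mono_set hcover
    _ ≤ ∑' n, ∫⁻ z in B n, ENNReal.ofReal (‖z‖^3)⁻¹ := lintegral_iUnion_le _ _
    _ ≤ ∑' n : ℕ, ENNReal.ofReal (4/S*(2⁻¹:ℝ)^n) * kb := by
        refine ENNReal.tsum_le_tsum fun n => ?_
        have hb : ∫⁻ z in B n, ENNReal.ofReal (‖z‖^3)⁻¹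
            ≤ ∫⁻ _ in B n, ENNReal.ofReal (((S * 2^n)^3)⁻¹) := by
          refine setLIntegral_mono' (hBmeas n) fun z hz => ?_
          refine ENNReal.ofReal_le_ofReal (inv_anti₀ (by positivity) ?_)
          have h1 : (0:ℝ) ≤ S * 2^n := by positivity
          exact pow_le_pow_left₀ h1 hz.1 3
        refine hb.trans ?_
        rw [setLIntegral_const]
        have hvol : volume (B n) ≤ ENNReal.ofReal ((S*2^(n+1))^2) * kb := by
          rw [← vol_ball (0:E2) (by positivity)]
          exact measure_mono Set.inter_subset_right
        calc ENNReal.ofReal (((S * 2^n)^3)⁻¹) * volume (B n)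
            ≤ ENNReal.ofReal (((S * 2^n)^3)⁻¹) *
              (ENNReal.ofReal ((S*2^(n+1))^2) * kb) := mul_le_mul_right hvol _
          _ = ENNReal.ofReal (4/S*(2⁻¹:ℝ)^n) * kb := by
              rw [← mul_assoc, ← ENNReal.ofReal_mul (by positivity)]
              congr 2
              have h2 : ((2:ℝ))^n ≠ 0 := by positivity
              simp only [inv_pow]
              field_simp
              ring
    _ = ENNReal.ofReal (8/S) * kb := by
        rw [ENNReal.tsum_mul_right, tsum_half (by positivity)]
        congr 1; ring

private lemma pieceB {S : ℝ} (hS : 1 ≤ S) {N : ℕ} (hN : S < 2^N) :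
    ∫⁻ z in {z : E2 | ‖z‖ ≤ S}, ENNReal.ofReal (1 + ‖z‖^2)⁻¹
      ≤ (4 * N + 1) * kb := by
  classical
  set C : ℕ → Set E2 := fun n =>
    if n < N then {z : E2 | (2:ℝ)^n ≤ ‖z‖} ∩ Metric.ball 0 (2^(n+1)) else ∅ with hC
  have hcover : {z : E2 | ‖z‖ ≤ S} ⊆ Metric.ball 0 1 ∪ ⋃ n, C n := by
    intro z hz
    rcases lt_or_ge ‖z‖ 1 with h1 | h1
    · exact Or.inl (by simpa [Metric.mem_ball, dist_eq_norm] using h1)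
    · right
      have hzS : ‖z‖ ≤ S := hz
      have hex : ∃ n : ℕ, ‖z‖ < 2^n := ⟨N, lt_of_le_of_lt hzS hN⟩
      have h₀ : ‖z‖ < 2^(Nat.find hex) := Nat.find_spec hex
      have hn₀ : Nat.find hex ≠ 0 := by
        intro h; rw [h] at h₀; simp at h₀; linarith
      obtain ⟨n, hn⟩ := Nat.exists_eq_succ_of_ne_zero hn₀
      have h₁ : ¬ (‖z‖ < 2^n) := Nat.find_min hex (by omega)
      have hnN : n < N := by
        by_contra hcon
        push_neg at hcon
        have : (2:ℝ)^N ≤ 2^n := pow_le_pow_right₀ (by norm_num) hcon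
        exact h₁ (lt_of_le_of_lt hzS (lt_of_lt_of_le hN this))
      refine Set.mem_iUnion.2 ⟨n, ?_⟩
      rw [hC]
      simp only [hnN, if_true]
      refine ⟨not_lt.1 h₁, ?_⟩
      rw [hn, Nat.succ_eq_add_one] at h₀
      simpa [Metric.mem_ball, dist_eq_norm] using h₀
  calc ∫⁻ z in {z : E2 | ‖z‖ ≤ S}, ENNReal.ofReal (1 + ‖z‖^2)⁻¹
      ≤ ∫⁻ z in Metric.ball 0 1 ∪ ⋃ n, C n, ENNReal.ofReal (1 + ‖z‖^2)⁻¹ :=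
        lintegral_mono_set hcover
    _ ≤ (∫⁻ z in Metric.ball (0:E2) 1, ENNReal.ofReal (1 + ‖z‖^2)⁻¹)
        + ∫⁻ z in ⋃ n, C n, ENNReal.ofReal (1 + ‖z‖^2)⁻¹ := lintegral_union_le _ _ _
    _ ≤ kb + ∑' n, ∫⁻ z in C n, ENNReal.ofReal (1 + ‖z‖^2)⁻¹ := by
        refine add_le_add ?_ (lintegral_iUnion_le _ _)
        have : ∫⁻ z in Metric.ball (0:E2) 1, ENNReal.ofReal (1 + ‖z‖^2)⁻¹
            ≤ ∫⁻ _ in Metric.ball (0:E2) 1, 1 := by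
          refine setLIntegral_mono' measurableSet_ball fun z _ => ?_
          rw [show (1:ℝ≥0∞) = ENNReal.ofReal 1 by simp]
          refine ENNReal.ofReal_le_ofReal ?_
          rw [inv_le_one_iff₀]; right; nlinarith [sq_nonneg ‖z‖]
        refine this.trans ?_
        rw [setLIntegral_const, one_mul, vol_ball (0:E2) zero_le_one]
        simp
    _ ≤ kb + ∑' n : ℕ, (if n < N then (4:ℝ≥0∞) * kb else 0) := by
        refine add_le_add_right (ENNReal.tsum_le_tsum fun n => ?_) _
        by_cases hn : n < N
        · simp only [hC, hn, if_true]
          have hb : ∫⁻ z in {z : E2 | (2:ℝ)^n ≤ ‖z‖} ∩ Metric.ball 0 (2^(n+1)),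
              ENNReal.ofReal (1 + ‖z‖^2)⁻¹
              ≤ ∫⁻ _ in {z : E2 | (2:ℝ)^n ≤ ‖z‖} ∩ Metric.ball 0 (2^(n+1)),
                ENNReal.ofReal (((2:ℝ)^n)^2)⁻¹ := by
            refine setLIntegral_mono'
              ((measurableSet_le measurable_const measurable_norm).inter
                measurableSet_ball) fun z hz => ?_
            refine ENNReal.ofReal_le_ofReal (inv_anti₀ (by positivity) ?_)
            have h := hz.1
            have hp : (0:ℝ) < 2^n := by positivity
            nlinarith [mul_le_mul h h hp.le (norm_nonneg z)]
          refine hb.trans ?_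
          rw [setLIntegral_const]
          have hvol : volume ({z : E2 | (2:ℝ)^n ≤ ‖z‖} ∩ Metric.ball 0 (2^(n+1)))
              ≤ ENNReal.ofReal (((2:ℝ)^(n+1))^2) * kb := by
            rw [← vol_ball (0:E2) (by positivity)]
            exact measure_mono Set.inter_subset_right
          calc ENNReal.ofReal (((2:ℝ)^n)^2)⁻¹ *
                volume ({z : E2 | (2:ℝ)^n ≤ ‖z‖} ∩ Metric.ball 0 (2^(n+1)))
              ≤ ENNReal.ofReal (((2:ℝ)^n)^2)⁻¹ *
                (ENNReal.ofReal (((2:ℝ)^(n+1))^2) * kb) := mul_le_mul_right hvol _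
            _ = (4:ℝ≥0∞) * kb := by
                rw [← mul_assoc, ← ENNReal.ofReal_mul (by positivity)]
                congr 2
                have : (((2:ℝ)^n)^2)⁻¹ * ((2:ℝ)^(n+1))^2 = 4 := by
                  have h2 : ((2:ℝ))^n ≠ 0 := by positivity
                  field_simp; ring
                rw [this]
                norm_num [ENNReal.ofReal_ofNat]
        · simp [hC, hn]
    _ = kb + (N : ℝ≥0∞) * ((4:ℝ≥0∞) * kb) := by
        congr 1
        rw [tsum_eq_sum (s := Finset.range N) (fun b hb => by
          simp [Finset.mem_range] at hb; simp [hb])]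
        rw [Finset.sum_congr rfl (fun i hi => if_pos (Finset.mem_range.1 hi)),
          Finset.sum_const, Finset.card_range, nsmul_eq_mul]
    _ = (4 * N + 1) * kb := by ring

end Stmt12Aux

open Metric Set ENNReal in
/-- Integral estimate for the Green kernel: there is `C > 0` with
`∫_{ℝ²} |z − z₀|⁻¹ (1+|z|²)⁻¹ dz ≤ C ln(2+|z₀|)/(1+|z₀|)` for all `z₀`. -/
theorem stmt12 : ∃ C > (0 : ℝ), ∀ z₀ : E2,
    ∫ z : E2, ‖z - z₀‖⁻¹ * (1 + ‖z‖ ^ 2)⁻¹ ≤ C * Real.log (2 + ‖z₀‖) / (1 + ‖z₀‖) := by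
  have hlog2 : 0 < Real.log 2 := Real.log_pos (by norm_num)
  set k : ℝ := kb.toReal with hk
  have hk0 : 0 ≤ k := ENNReal.toReal_nonneg
  refine ⟨72 / Real.log 2 * (k + 1), by positivity, fun z₀ => ?_⟩
  set R : ℝ := ‖z₀‖ with hR
  have hR0 : 0 ≤ R := norm_nonneg _
  set L : ℝ := Real.log (2 + R) with hL
  have hL2 : Real.log 2 ≤ L := Real.log_le_log (by norm_num) (by linarith)
  have hL0 : 0 < L := lt_of_lt_of_le hlog2 hL2
  set ρ : ℝ := (1 + R) / 2 with hρdef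
  have hρ : 0 < ρ := by positivity
  set S : ℝ := 2 * (1 + R) with hSdef
  have hS1 : 1 ≤ S := by simp only [hSdef]; linarith
  have hS0 : 0 < S := by linarith
  set N : ℕ := ⌊Real.logb 2 S⌋₊ + 1 with hN
  have hSN : S < 2 ^ N := by
    have h1 : Real.logb 2 S < (N : ℝ) := by
      have := Nat.lt_floor_add_one (Real.logb 2 S)
      push_cast [hN]
      linarith
    calc S = (2:ℝ) ^ Real.logb 2 S := (Real.rpow_logb (by norm_num) (by norm_num) hS0).symm
      _ < (2:ℝ) ^ (N:ℝ) := Real.rpow_lt_rpow_left_iff (by norm_num) |>.2 h1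
      _ = 2 ^ N := by rw [Real.rpow_natCast]
  have hNle : (N : ℝ) ≤ 3 * L / Real.log 2 := by
    have h1 : (N : ℝ) ≤ Real.logb 2 S + 1 := by
      push_cast [hN]
      have := Nat.floor_le (Real.logb_nonneg (b := 2) (by norm_num) hS1)
      linarith
    have h2 : Real.logb 2 S = Real.log S / Real.log 2 := rfl
    have h3 : Real.log S ≤ 2 * L := by
      have hle : S ≤ (2 + R)^2 := by nlinarith
      calc Real.log S ≤ Real.log ((2+R)^2) := Real.log_le_log hS0 hle
        _ = 2 * L := by rw [Real.log_pow]; push_cast; ring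
    have h4 : 1 ≤ L / Real.log 2 := (one_le_div hlog2).2 hL2
    rw [h2] at h1
    have h5 : Real.log S / Real.log 2 ≤ 2 * L / Real.log 2 := by gcongr
    have h6 : 3 * L / Real.log 2 = 2 * L / Real.log 2 + L / Real.log 2 := by ring
    linarith
  -- majorant functions
  set F₁ : E2 → ℝ≥0∞ := (Metric.ball z₀ ρ).indicator
    (fun z => ENNReal.ofReal (16/(1+R)^2) * ENNReal.ofReal ‖z - z₀‖⁻¹) with hF₁
  set F₂ : E2 → ℝ≥0∞ := {z : E2 | ‖z‖ ≤ S}.indicator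
    (fun z => ENNReal.ofReal (2/(1+R)) * ENNReal.ofReal (1+‖z‖^2)⁻¹) with hF₂
  set F₃ : E2 → ℝ≥0∞ := {z : E2 | S < ‖z‖}.indicator
    (fun z => ENNReal.ofReal 2 * ENNReal.ofReal ((‖z‖^3)⁻¹)) with hF₃
  have hmeasB : MeasurableSet {z : E2 | ‖z‖ ≤ S} :=
    measurableSet_le measurable_norm measurable_const
  have hmeasC : MeasurableSet {z : E2 | S < ‖z‖} :=
    measurableSet_lt measurable_const measurable_norm
  have hpt : ∀ z : E2,
      ENNReal.ofReal (‖z - z₀‖⁻¹ * (1 + ‖z‖ ^ 2)⁻¹) ≤ F₁ z + F₂ z + F₃ z := by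
    intro z
    by_cases h1 : z ∈ Metric.ball z₀ ρ
    · refine le_trans ?_ (le_self_add.trans le_self_add : F₁ z ≤ F₁ z + F₂ z + F₃ z)
      rw [hF₁, Set.indicator_of_mem h1, ← ENNReal.ofReal_mul (by positivity)]
      refine ENNReal.ofReal_le_ofReal ?_
      have hz : ‖z - z₀‖ < ρ := by simpa [Metric.mem_ball, dist_eq_norm] using h1
      have hzn : R - ‖z‖ ≤ ‖z - z₀‖ := by
        have := norm_sub_norm_le z₀ z
        rwa [norm_sub_rev] at this
      have hx : (R - 1)/2 < ‖z‖ := by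
        rw [hρdef] at hz; linarith
      have hkey : (1+R)^2 / 16 ≤ 1 + ‖z‖^2 := by
        rcases le_or_gt R 3 with hR3 | hR3
        · nlinarith [sq_nonneg ‖z‖]
        · nlinarith [norm_nonneg z, sq_nonneg (R-3)]
      have hinv : (1+‖z‖^2)⁻¹ ≤ 16/(1+R)^2 := by
        rw [← inv_div ((1+R)^2) 16]
        exact inv_anti₀ (by positivity) hkey
      calc ‖z - z₀‖⁻¹ * (1 + ‖z‖ ^ 2)⁻¹ ≤ ‖z - z₀‖⁻¹ * (16/(1+R)^2) :=
            mul_le_mul_of_nonneg_left hinv (by positivity)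
        _ = 16/(1+R)^2 * ‖z - z₀‖⁻¹ := by ring
    · by_cases h2 : z ∈ {z : E2 | ‖z‖ ≤ S}
      · refine le_trans ?_ (le_add_self.trans le_self_add : F₂ z ≤ F₁ z + F₂ z + F₃ z)
        rw [hF₂, Set.indicator_of_mem h2, ← ENNReal.ofReal_mul (by positivity)]
        refine ENNReal.ofReal_le_ofReal ?_
        have hz : ρ ≤ ‖z - z₀‖ := by
          simpa [Metric.mem_ball, dist_eq_norm, not_lt] using h1
        have hi : ‖z - z₀‖⁻¹ ≤ 2/(1+R) := by
          rw [← inv_div (1+R) 2]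
          exact inv_anti₀ hρ hz
        exact mul_le_mul_of_nonneg_right hi (by positivity)
      · have h3 : S < ‖z‖ := not_le.1 h2
        refine le_trans ?_ (le_add_self : F₃ z ≤ (F₁ z + F₂ z) + F₃ z)
        rw [hF₃, Set.indicator_of_mem (show z ∈ {z : E2 | S < ‖z‖} from h3),
          ← ENNReal.ofReal_mul (by norm_num)]
        refine ENNReal.ofReal_le_ofReal ?_
        have hzpos : 0 < ‖z‖ := lt_trans hS0 h3
        have hns : ‖z‖ - R ≤ ‖z - z₀‖ := by
          simpa using norm_sub_norm_le z z₀
        have hzz : ‖z‖/2 ≤ ‖z - z₀‖ := by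
          rw [hSdef] at h3; linarith
        have hi1 : ‖z - z₀‖⁻¹ ≤ (‖z‖/2)⁻¹ := inv_anti₀ (by positivity) hzz
        have hi2 : (1+‖z‖^2)⁻¹ ≤ (‖z‖^2)⁻¹ := inv_anti₀ (by positivity) (by linarith)
        calc ‖z - z₀‖⁻¹ * (1 + ‖z‖ ^ 2)⁻¹ ≤ (‖z‖/2)⁻¹ * (‖z‖^2)⁻¹ :=
              mul_le_mul hi1 hi2 (by positivity) (by positivity)
          _ = 2 * (‖z‖^3)⁻¹ := by
              field_simp
  have hmeas : Measurable fun z : E2 => ‖z - z₀‖⁻¹ * (1 + ‖z‖ ^ 2)⁻¹ :=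
    ((measurable_id.sub_const z₀).norm.inv).mul
      ((measurable_const.add (measurable_norm.pow_const 2)).inv)
  have hmF₁ : Measurable F₁ :=
    (measurable_const.mul
      ((measurable_id.sub_const z₀).norm.inv.ennreal_ofReal)).indicator measurableSet_ball
  have hmF₂ : Measurable F₂ :=
    (measurable_const.mul
      ((measurable_const.add (measurable_norm.pow_const 2)).inv.ennreal_ofReal)).indicator hmeasB
  have key : ∫⁻ z : E2, ENNReal.ofReal (‖z - z₀‖⁻¹ * (1 + ‖z‖ ^ 2)⁻¹) ≤
      ENNReal.ofReal (72 / Real.log 2 * L / (1 + R)) * kb := by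
    have hcast : ((4:ℝ≥0∞) * N + 1) = ENNReal.ofReal (4*(N:ℝ)+1) := by
      rw [ENNReal.ofReal_add (by positivity) zero_le_one, ENNReal.ofReal_one,
        ENNReal.ofReal_mul (by norm_num)]
      norm_num [ENNReal.ofReal_natCast]
    have e1 : ENNReal.ofReal (16/(1+R)^2) * (ENNReal.ofReal (4*ρ) * kb)
        = ENNReal.ofReal (32/(1+R)) * kb := by
      rw [← mul_assoc, ← ENNReal.ofReal_mul (by positivity)]
      congr 2
      rw [hρdef]
      have h1R : (1+R) ≠ 0 := by positivity
      field_simp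
      ring
    have e3 : ENNReal.ofReal 2 * (ENNReal.ofReal (8/S) * kb)
        = ENNReal.ofReal (8/(1+R)) * kb := by
      rw [← mul_assoc, ← ENNReal.ofReal_mul (by norm_num)]
      congr 2
      rw [hSdef]
      have h1R : (1+R) ≠ 0 := by positivity
      field_simp
    have e2 : ENNReal.ofReal (2/(1+R)) * (((4:ℝ≥0∞)*N+1) * kb)
        ≤ ENNReal.ofReal (26*L/(Real.log 2*(1+R))) * kb := by
      rw [hcast, ← mul_assoc, ← ENNReal.ofReal_mul (by positivity)]
      refine mul_le_mul_left (ENNReal.ofReal_le_ofReal ?_) kb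
      have ha : 1 ≤ L / Real.log 2 := (one_le_div hlog2).2 hL2
      have hb : 4*(N:ℝ)+1 ≤ 13*(L/Real.log 2) := by
        have h3 : 3 * L / Real.log 2 = 3*(L/Real.log 2) := by ring
        rw [h3] at hNle
        linarith
      calc 2/(1+R) * (4*(N:ℝ)+1) ≤ 2/(1+R) * (13*(L/Real.log 2)) := by
            refine mul_le_mul_of_nonneg_left hb (by positivity)
        _ = 26*L/(Real.log 2*(1+R)) := by
            have h1R : (1+R) ≠ 0 := by positivity
            field_simp
            ring
    calc ∫⁻ z : E2, ENNReal.ofReal (‖z - z₀‖⁻¹ * (1 + ‖z‖ ^ 2)⁻¹)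
        ≤ ∫⁻ z : E2, (F₁ z + F₂ z + F₃ z) := lintegral_mono hpt
      _ = (∫⁻ z : E2, F₁ z) + (∫⁻ z : E2, F₂ z) + (∫⁻ z : E2, F₃ z) := by
          rw [lintegral_add_left (f := fun z => F₁ z + F₂ z) (hmF₁.add hmF₂), lintegral_add_left hmF₁]
      _ ≤ (ENNReal.ofReal (16/(1+R)^2) * (ENNReal.ofReal (4*ρ) * kb))
          + (ENNReal.ofReal (2/(1+R)) * (((4:ℝ≥0∞)*N+1) * kb))
          + (ENNReal.ofReal 2 * (ENNReal.ofReal (8/S) * kb)) := by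
          refine add_le_add (add_le_add ?_ ?_) ?_
          · rw [hF₁, lintegral_indicator measurableSet_ball,
              lintegral_const_mul' _ _ ENNReal.ofReal_ne_top]
            exact mul_le_mul_right (pieceA z₀ hρ) _
          · rw [hF₂, lintegral_indicator hmeasB,
              lintegral_const_mul' _ _ ENNReal.ofReal_ne_top]
            exact mul_le_mul_right (pieceB hS1 hSN) _
          · rw [hF₃, lintegral_indicator hmeasC,
              lintegral_const_mul' _ _ ENNReal.ofReal_ne_top]
            exact mul_le_mul_right (pieceC hS1) _
      _ ≤ ENNReal.ofReal (32/(1+R)) * kb + ENNReal.ofReal (26*L/(Real.log 2*(1+R))) * kb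
          + ENNReal.ofReal (8/(1+R)) * kb := by
          rw [e1, e3]
          exact add_le_add (add_le_add_right e2 _) le_rfl
      _ = (ENNReal.ofReal (32/(1+R) + 26*L/(Real.log 2*(1+R)) + 8/(1+R))) * kb := by
          rw [ENNReal.ofReal_add (by positivity) (by positivity),
            ENNReal.ofReal_add (by positivity) (by positivity), add_mul, add_mul]
      _ ≤ ENNReal.ofReal (72 / Real.log 2 * L / (1 + R)) * kb := by
          refine mul_le_mul_left (ENNReal.ofReal_le_ofReal ?_) kb
          have ha : 1 ≤ L / Real.log 2 := (one_le_div hlog2).2 hL2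
          have h1R : (0:ℝ) < 1 + R := by linarith
          have heq : 32/(1+R) + 26*L/(Real.log 2*(1+R)) + 8/(1+R)
              = (40 + 26*(L/Real.log 2))/(1+R) := by
            field_simp
            ring
          have heq2 : 72 / Real.log 2 * L / (1 + R) = (72*(L/Real.log 2))/(1+R) := by
            field_simp
          rw [heq, heq2]
          gcongr
          linarith
  have hint : ∫ z : E2, ‖z - z₀‖⁻¹ * (1 + ‖z‖ ^ 2)⁻¹
      = (∫⁻ z : E2, ENNReal.ofReal (‖z - z₀‖⁻¹ * (1 + ‖z‖ ^ 2)⁻¹)).toReal := by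
    rw [integral_eq_lintegral_of_nonneg_ae (ae_of_all _ fun z => by positivity)
      hmeas.aestronglyMeasurable]
  rw [hint]
  have hfin : ENNReal.ofReal (72 / Real.log 2 * L / (1 + R)) * kb ≠ ⊤ :=
    ENNReal.mul_ne_top ENNReal.ofReal_ne_top kb_lt_top.ne
  have h1R : (0:ℝ) < 1 + R := by linarith
  calc (∫⁻ z : E2, ENNReal.ofReal (‖z - z₀‖⁻¹ * (1 + ‖z‖ ^ 2)⁻¹)).toReal
      ≤ (ENNReal.ofReal (72 / Real.log 2 * L / (1 + R)) * kb).toReal :=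
        ENNReal.toReal_mono hfin key
    _ = 72 / Real.log 2 * L / (1 + R) * k := by
        rw [ENNReal.toReal_mul, ENNReal.toReal_ofReal (by positivity)]
    _ ≤ 72 / Real.log 2 * (k + 1) * L / (1 + R) := by
        have e : 72 / Real.log 2 * L / (1 + R) * k = 72 / Real.log 2 * L * k / (1+R) := by
          ring
        have e' : 72 / Real.log 2 * (k + 1) * L / (1 + R)
            = 72 / Real.log 2 * L * (k+1) / (1+R) := by ring
        rw [e, e']
        refine (div_le_div_iff_of_pos_right h1R).2 ?_
        refine mul_le_mul_of_nonneg_left (by linarith) (by positivity)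
end
end
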